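/- The identity operator on the Banach lattice ℓ² of square-summable real sequences is weakly compact but not almost limited. -/

import Mathlib

open Filter Topology Metric Set NormedSpace BoundedContinuousFunction

noncomputable section

/-- The value `|f| x` of the modulus of a functional `f` in the dual of a Banach lattice,
at a positive element `x`, given by the Riesz–Kantorovich formula. -/
def dualAbs {E : Type*} [NormedAddCommGroup E] [Lattice E] [HasSolidNorm E]
    [IsOrderedAddMonoid E] [NormedSpace ℝ E]
    (f : E →L[ℝ] ℝ) (x : E) : ℝ :=
  sSup {r : ℝ | ∃ z : E, |z| ≤ x ∧ r = |f z|}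

/-- Two functionals `f, g` on a Banach lattice are disjoint, i.e. `|f| ⊓ |g| = 0` in the dual
lattice; by the Riesz–Kantorovich formula this means that for every `x ≥ 0` the infimum of
`|f| y + |g| (x - y)` over `0 ≤ y ≤ x` is `0`. -/
def DualDisjoint {E : Type*} [NormedAddCommGroup E] [Lattice E] [HasSolidNorm E]
    [IsOrderedAddMonoid E] [NormedSpace ℝ E]
    (f g : E →L[ℝ] ℝ) : Prop :=
  ∀ x : E, 0 ≤ x → ∀ ε : ℝ, 0 < ε →
    ∃ y : E, 0 ≤ y ∧ y ≤ x ∧ dualAbs f y + dualAbs g (x - y) < ε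

/-- A sequence of functionals is weak* null if it converges to `0` pointwise. -/
def WeakStarNull {E : Type*} [NormedAddCommGroup E] [NormedSpace ℝ E]
    (f : ℕ → E →L[ℝ] ℝ) : Prop :=
  ∀ x : E, Tendsto (fun n => f n x) atTop (𝓝 0)

/-- A functional on a Banach lattice is positive if it is nonnegative on the positive cone. -/
def PositiveFunctional {E : Type*} [NormedAddCommGroup E] [Lattice E] [HasSolidNorm E]
    [IsOrderedAddMonoid E] [NormedSpace ℝ E]
    (f : E →L[ℝ] ℝ) : Prop :=
  ∀ x : E, 0 ≤ x → 0 ≤ f x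

/-- An operator between Banach lattices is positive if it maps the positive cone into
the positive cone. -/
def IsPositiveOp {E F : Type*} [NormedAddCommGroup E] [Lattice E] [HasSolidNorm E]
    [IsOrderedAddMonoid E] [NormedSpace ℝ E]
    [NormedAddCommGroup F] [Lattice F] [HasSolidNorm F]
    [IsOrderedAddMonoid F] [NormedSpace ℝ F] (T : E →L[ℝ] F) : Prop :=
  ∀ x : E, 0 ≤ x → 0 ≤ T x

/-- An operator `T : X → E` into a Banach lattice is almost limited if `‖T* fₙ‖ → 0` for
every disjoint weak* null sequence `(fₙ)` in `E*`. -/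
def AlmostLimited {X E : Type*} [NormedAddCommGroup X] [NormedSpace ℝ X]
    [NormedAddCommGroup E] [Lattice E] [HasSolidNorm E]
    [IsOrderedAddMonoid E] [NormedSpace ℝ E] (T : X →L[ℝ] E) : Prop :=
  ∀ f : ℕ → E →L[ℝ] ℝ, WeakStarNull f → Pairwise (fun n m => DualDisjoint (f n) (f m)) →
    Tendsto (fun n => ‖(f n).comp T‖) atTop (𝓝 0)

/-- A Banach lattice `E` has property (d) if `|fₙ| → 0` in the weak* topology for every
disjoint weak* null sequence `(fₙ)` in `E*` (it suffices to test `|fₙ|` on the positive cone). -/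
def PropertyD (E : Type*) [NormedAddCommGroup E] [Lattice E] [HasSolidNorm E]
    [IsOrderedAddMonoid E] [NormedSpace ℝ E] : Prop :=
  ∀ f : ℕ → E →L[ℝ] ℝ, WeakStarNull f → Pairwise (fun n m => DualDisjoint (f n) (f m)) →
    ∀ x : E, 0 ≤ x → Tendsto (fun n => dualAbs (f n) x) atTop (𝓝 0)

/-- A Banach lattice `E` has the dual positive Schur property if every weak* null sequence of
positive functionals is norm null. -/
def DualPositiveSchur (E : Type*) [NormedAddCommGroup E] [Lattice E] [HasSolidNorm E]
    [IsOrderedAddMonoid E] [NormedSpace ℝ E] : Prop :=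
  ∀ f : ℕ → E →L[ℝ] ℝ, WeakStarNull f → (∀ n, PositiveFunctional (f n)) →
    Tendsto (fun n => ‖f n‖) atTop (𝓝 0)

/-- A Banach lattice `F` has the positive Schur property if every weakly null sequence of
positive elements is norm null. -/
def PositiveSchur (F : Type*) [NormedAddCommGroup F] [Lattice F] [HasSolidNorm F]
    [IsOrderedAddMonoid F] [NormedSpace ℝ F] : Prop :=
  ∀ x : ℕ → F, (∀ g : F →L[ℝ] ℝ, Tendsto (fun n => g (x n)) atTop (𝓝 0)) →
    (∀ n, 0 ≤ x n) → Tendsto (fun n => ‖x n‖) atTop (𝓝 0)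

/-- An operator is weakly compact if the image of the closed unit ball is relatively
compact in the weak topology. -/
def IsWeaklyCompactOp {X Y : Type*} [NormedAddCommGroup X] [NormedSpace ℝ X]
    [NormedAddCommGroup Y] [NormedSpace ℝ Y] (T : X →L[ℝ] Y) : Prop :=
  IsCompact (closure (toWeakSpaceCLM ℝ Y '' (T '' closedBall 0 1)))

/-- A lattice is σ-Dedekind complete if every countable nonempty order-bounded subset has a
supremum. -/
def SigmaDedekindComplete (E : Type*) [Lattice E] : Prop :=
  ∀ s : Set E, s.Countable → s.Nonempty → BddAbove s → ∃ a, IsLUB s a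

/-- The norm of a Banach lattice is order continuous if `x_α ↓ 0` implies `‖x_α‖ ↓ 0`,
for every decreasing net `(x_α)` with infimum `0`. -/
def HasOrderContinuousNorm (E : Type*) [NormedAddCommGroup E] [Lattice E] [HasSolidNorm E]
    [IsOrderedAddMonoid E] : Prop :=
  ∀ ⦃ι : Type*⦄ [Preorder ι] [Nonempty ι] [IsDirected ι (· ≤ ·)] (x : ι → E),
    Antitone x → IsGLB (Set.range x) 0 → Tendsto (fun i => ‖x i‖) atTop (𝓝 0)

/-- A Banach space is reflexive if the canonical embedding into its double dual is
surjective. -/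
def ReflexiveSpace (X : Type*) [NormedAddCommGroup X] [NormedSpace ℝ X] : Prop :=
  Function.Surjective (inclusionInDoubleDual ℝ X)

/-- The Banach lattice `ℓ^∞` of bounded real sequences. -/
abbrev LinftySeq : Type := ℕ →ᵇ ℝ

/-- The Banach lattice `ℓ²` of square-summable real sequences, realized as an `L²`-space over
`ℕ` with counting measure. -/
abbrev LtwoSeq : Type :=
  MeasureTheory.Lp (α := ℕ) ℝ 2 (MeasureTheory.Measure.count)

namespace IdLtwoProof

open MeasureTheory InnerProductSpace

local notation "⟪" x ", " y "⟫" => @inner ℝ _ _ x y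

/-- a.e. statements for the counting measure hold everywhere. -/
lemma ae_count {p : ℕ → Prop} (h : ∀ᵐ n ∂(Measure.count : Measure ℕ), p n) :
    ∀ n, p n := by
  intro n
  by_contra hn
  have h0 : (Measure.count : Measure ℕ) {a | ¬ p a} = 0 := MeasureTheory.ae_iff.mp h
  rw [Measure.count_eq_zero_iff] at h0
  exact absurd h0 (Set.Nonempty.ne_empty ⟨n, hn⟩)

lemma count_singleton_ne_top (n : ℕ) :
    (Measure.count : Measure ℕ) {n} ≠ ⊤ := by
  simp [Measure.count_singleton]

/-- the `n`-th standard basis vector of `ℓ²`. -/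
def e (n : ℕ) : LtwoSeq :=
  indicatorConstLp 2 (measurableSet_singleton n) (count_singleton_ne_top n) (1 : ℝ)

lemma e_coeFn (n : ℕ) : ∀ k, e n k = Set.indicator {n} (fun _ => (1:ℝ)) k :=
  ae_count (indicatorConstLp_coeFn)

lemma inner_e (n : ℕ) (z : LtwoSeq) : ⟪e n, z⟫ = z n := by
  rw [e, MeasureTheory.L2.inner_indicatorConstLp_eq_inner_setIntegral ℝ
      (measurableSet_singleton n) (count_singleton_ne_top n) (1 : ℝ) z]
  rw [Measure.restrict_singleton, MeasureTheory.integral_smul_measure,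
    MeasureTheory.integral_dirac, Measure.count_singleton]
  simp

lemma orthonormal_e : Orthonormal ℝ e := by
  rw [orthonormal_iff_ite]
  intro i j
  rw [inner_e, e_coeFn]
  by_cases h : i = j <;> simp [Set.indicator, h, eq_comm]

lemma norm_e (n : ℕ) : ‖e n‖ = 1 := orthonormal_e.1 n

/-- the coordinate functionals on `ℓ²`. -/
def f (n : ℕ) : LtwoSeq →L[ℝ] ℝ := innerSL ℝ (e n)

lemma f_apply (n : ℕ) (z : LtwoSeq) : f n z = z n := inner_e n z

lemma weakStarNull_f : WeakStarNull f := by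
  intro x
  have hsum : Summable fun n => ‖⟪e n, x⟫‖ ^ 2 :=
    orthonormal_e.inner_products_summable (x := x)
  have h2 : Tendsto (fun n => ‖⟪e n, x⟫‖ ^ 2) atTop (𝓝 0) :=
    hsum.tendsto_atTop_zero
  have h1 : Tendsto (fun n => ‖⟪e n, x⟫‖) atTop (𝓝 0) := by
    have := (Real.continuous_sqrt.tendsto 0).comp h2
    rw [Real.sqrt_zero] at this
    refine this.congr fun n => ?_
    simp [Real.sqrt_sq_eq_abs]
  have : Tendsto (fun n => f n x) atTop (𝓝 0) :=
    tendsto_zero_iff_norm_tendsto_zero.mpr h1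
  exact this

lemma dualAbs_f_eq_zero {n : ℕ} {y : LtwoSeq} (hy : 0 ≤ y) (hyn : y n = 0) :
    dualAbs (f n) y = 0 := by
  have hset : {r : ℝ | ∃ z : LtwoSeq, |z| ≤ y ∧ r = |f n z|} = {0} := by
    ext r
    simp only [Set.mem_setOf_eq, Set.mem_singleton_iff]
    constructor
    · rintro ⟨z, hz, rfl⟩
      have hle : ∀ k, |z| k ≤ y k := ae_count ((MeasureTheory.Lp.coeFn_le _ _).mpr hz)
      have habs : ∀ k, |z| k = |z k| := ae_count (MeasureTheory.Lp.coeFn_abs z)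
      have : |z n| ≤ y n := habs n ▸ hle n
      rw [hyn] at this
      have hz0 : z n = 0 := abs_nonpos_iff.mp this
      rw [f_apply, hz0, abs_zero]
    · rintro rfl
      exact ⟨0, by simpa [abs_zero] using hy, by simp⟩
  rw [dualAbs, hset, csSup_singleton]

lemma pairwise_disjoint_f : Pairwise (fun n m => DualDisjoint (f n) (f m)) := by
  intro n m hnm
  intro x hx ε hε
  -- pointwise values of x
  have hx' : ∀ k, 0 ≤ x k := ae_count ((MeasureTheory.Lp.coeFn_nonneg x).mpr hx)
  set c : ℝ := x n with hc
  set y : LtwoSeq := x - c • e n with hy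
  -- pointwise values of y
  have hysub : ∀ᵐ k ∂(Measure.count : Measure ℕ), y k = x k - (c • e n) k :=
    MeasureTheory.Lp.coeFn_sub x (c • e n)
  have hysmul : ∀ᵐ k ∂(Measure.count : Measure ℕ), (c • e n) k = c • (e n k) :=
    MeasureTheory.Lp.coeFn_smul c (e n)
  have hyval : ∀ k, y k = x k - c * Set.indicator {n} (fun _ => (1:ℝ)) k := by
    intro k
    have h1 := ae_count hysub k
    have h2 := ae_count hysmul k
    rw [h1, h2, e_coeFn n k]
    simp [smul_eq_mul]
  have hyval' : ∀ k, y k = if k = n then 0 else x k := by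
    intro k
    rw [hyval]
    by_cases h : k = n
    · simp [Set.indicator, h, hc]
    · simp [Set.indicator, h]
  -- 0 ≤ y
  have hy0 : 0 ≤ y := by
    rw [← MeasureTheory.Lp.coeFn_nonneg]
    refine Filter.Eventually.of_forall fun k => ?_
    rw [hyval']
    by_cases h : k = n
    · simp [h]
    · simp [h, hx' k]
  -- y ≤ x
  have hyx : y ≤ x := by
    rw [← MeasureTheory.Lp.coeFn_le]
    filter_upwards [hysub, hysmul] with k h1 h2
    rw [h1, h2, e_coeFn n k]
    have : 0 ≤ c * Set.indicator {n} (fun _ => (1:ℝ)) k := by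
      apply mul_nonneg (hx' n)
      by_cases h : k ∈ ({n} : Set ℕ) <;> simp [Set.indicator, h]
    simp only [smul_eq_mul]
    linarith
  refine ⟨y, hy0, hyx, ?_⟩
  have hxy : x - y = c • e n := by rw [hy]; abel
  have h1 : dualAbs (f n) y = 0 := dualAbs_f_eq_zero hy0 (by rw [hyval']; simp)
  have hxy0 : 0 ≤ x - y := sub_nonneg.mpr hyx
  have hxyval : (x - y) m = 0 := by
    have hs : ∀ᵐ k ∂(Measure.count : Measure ℕ), (x - y) k = x k - y k :=
      MeasureTheory.Lp.coeFn_sub x y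
    have := ae_count hs m
    rw [this, hyval' m, if_neg (fun h => hnm h.symm)]
    ring
  have h2 : dualAbs (f m) (x - y) = 0 := dualAbs_f_eq_zero hxy0 hxyval
  rw [h1, h2]
  simpa using hε

lemma not_almostLimited : ¬ AlmostLimited (ContinuousLinearMap.id ℝ LtwoSeq) := by
  intro h
  have := h f weakStarNull_f pairwise_disjoint_f
  have hnorm : ∀ n, ‖(f n).comp (ContinuousLinearMap.id ℝ LtwoSeq)‖ = 1 := by
    intro n
    rw [ContinuousLinearMap.comp_id, f, innerSL_apply_norm, norm_e]
  have h1 : Tendsto (fun _ : ℕ => (1:ℝ)) atTop (𝓝 0) := by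
    refine this.congr fun n => hnorm n
  have := tendsto_nhds_unique h1 tendsto_const_nhds
  norm_num at this

section WeaklyCompact

/-- transport of the weak-* topology on the dual to the weak topology via Riesz. -/
lemma continuous_toWeak :
    Continuous fun g : WeakDual ℝ LtwoSeq =>
      toWeakSpace ℝ LtwoSeq ((InnerProductSpace.toDual ℝ LtwoSeq).symm g) := by
  apply WeakBilin.continuous_of_continuous_eval
  intro y
  have key : ∀ g : WeakDual ℝ LtwoSeq,
      y ((InnerProductSpace.toDual ℝ LtwoSeq).symm g)
        = g ((InnerProductSpace.toDual ℝ LtwoSeq).symm y) := by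
    intro g
    have h1 : y ((InnerProductSpace.toDual ℝ LtwoSeq).symm g)
        = ⟪(InnerProductSpace.toDual ℝ LtwoSeq).symm y,
            (InnerProductSpace.toDual ℝ LtwoSeq).symm g⟫ := by
      conv_lhs => rw [← (InnerProductSpace.toDual ℝ LtwoSeq).apply_symm_apply y]
      rw [InnerProductSpace.toDual_apply_apply]
    rw [h1, real_inner_comm, ← InnerProductSpace.toDual_apply_apply]
    exact congrArg (fun h : StrongDual ℝ LtwoSeq => h _)
      ((InnerProductSpace.toDual ℝ LtwoSeq).apply_symm_apply (WeakDual.toStrongDual g))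
  have : (fun g : WeakDual ℝ LtwoSeq =>
      (topDualPairing ℝ LtwoSeq).flip
        (toWeakSpace ℝ LtwoSeq ((InnerProductSpace.toDual ℝ LtwoSeq).symm g)) y)
      = fun g : WeakDual ℝ LtwoSeq =>
        g ((InnerProductSpace.toDual ℝ LtwoSeq).symm y) := by
    funext g
    exact key g
  rw [this]
  exact WeakBilin.eval_continuous (topDualPairing ℝ LtwoSeq) _

lemma weaklyCompact : IsWeaklyCompactOp (ContinuousLinearMap.id ℝ LtwoSeq) := by
  rw [IsWeaklyCompactOp]
  have himg : (ContinuousLinearMap.id ℝ LtwoSeq) '' closedBall 0 1 = closedBall 0 1 := by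
    simp
  rw [himg]
  have hconv : Convex ℝ (closedBall (0 : LtwoSeq) 1) := convex_closedBall (0 : LtwoSeq) 1
  have hCLM : (toWeakSpaceCLM ℝ LtwoSeq '' closedBall 0 1 : Set (WeakSpace ℝ LtwoSeq))
      = toWeakSpace ℝ LtwoSeq '' closedBall 0 1 := by
    apply Set.image_congr
    intro a _
    exact toWeakSpaceCLM_eq_toWeakSpace ℝ LtwoSeq a
  rw [hCLM, ← hconv.toWeakSpace_closure ℝ, closure_closedBall]
  -- now show compactness of the image of the closed ball
  have hball : IsCompact (WeakDual.toStrongDual ⁻¹'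
      closedBall (0 : StrongDual ℝ LtwoSeq) 1) :=
    WeakDual.isCompact_closedBall (𝕜 := ℝ) (E := LtwoSeq) 0 1
  have himage := hball.image continuous_toWeak
  have heq : (fun g : WeakDual ℝ LtwoSeq =>
        toWeakSpace ℝ LtwoSeq ((InnerProductSpace.toDual ℝ LtwoSeq).symm g)) ''
        (WeakDual.toStrongDual ⁻¹' closedBall (0 : StrongDual ℝ LtwoSeq) 1)
      = toWeakSpace ℝ LtwoSeq '' closedBall 0 1 := by
    ext w
    constructor
    · rintro ⟨g, hg, rfl⟩
      refine ⟨(InnerProductSpace.toDual ℝ LtwoSeq).symm g, ?_, rfl⟩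
      rw [mem_closedBall_zero_iff]
      erw [LinearIsometryEquiv.norm_map]
      exact (by simpa [mem_closedBall_zero_iff] using hg : ‖WeakDual.toStrongDual g‖ ≤ 1)
    · rintro ⟨v, hv, rfl⟩
      refine ⟨InnerProductSpace.toDual ℝ LtwoSeq v, ?_, by simp⟩
      change WeakDual.toStrongDual (InnerProductSpace.toDual ℝ LtwoSeq v : _) ∈
        closedBall (0 : StrongDual ℝ LtwoSeq) 1
      rw [mem_closedBall_zero_iff]
      rw [show ‖WeakDual.toStrongDual (InnerProductSpace.toDual ℝ LtwoSeq v : _)‖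
            = ‖InnerProductSpace.toDual ℝ LtwoSeq v‖ from rfl,
        LinearIsometryEquiv.norm_map]
      simpa [mem_closedBall_zero_iff] using hv
  rw [heq] at himage
  exact himage

end WeaklyCompact

end IdLtwoProof

/-- The identity operator of `ℓ²` is weakly compact but not almost limited. -/
theorem id_ltwo_weaklyCompact_not_almostLimited :
    IsWeaklyCompactOp (ContinuousLinearMap.id ℝ LtwoSeq) ∧
      ¬ AlmostLimited (ContinuousLinearMap.id ℝ LtwoSeq) := by
  exact ⟨IdLtwoProof.weaklyCompact, IdLtwoProof.not_almostLimited⟩
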